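/- Let A be a differential ring, X = Spec^Δ A, O' the residue-field structure sheaf on X, and D any differential subring of O'(X) containing the image of the canonical map ι' : A → O'(X). Then the contraction map ι'* : Spec^Δ D → Spec^Δ A is a homeomorphism. -/

import Mathlib

/-- An ideal is a differential ideal w.r.t. a family of derivation maps `d`. -/
def IsDiffIdeal {A : Type*} [CommRing A] {k : ℕ} (d : Fin k → A → A) (I : Ideal A) : Prop :=
  ∀ i : Fin k, ∀ x ∈ I, d i x ∈ I

/-- The differential spectrum: prime differential ideals, with the Kolchin topology
(the subspace topology induced from the Zariski topology on `PrimeSpectrum`). -/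
abbrev DiffSpec {A : Type*} [CommRing A] {k : ℕ} (d : Fin k → A → A) :=
  {p : PrimeSpectrum A // IsDiffIdeal d p.asIdeal}

/-- A Keigher ring: the radical of every differential ideal is differential. -/
def IsKeigher {A : Type*} [CommRing A] {k : ℕ} (d : Fin k → A → A) : Prop :=
  ∀ I : Ideal A, IsDiffIdeal d I → IsDiffIdeal d I.radical

/-- `radDiffGen d E` is the smallest radical differential ideal containing `E`. -/
def radDiffGen {A : Type*} [CommRing A] {k : ℕ} (d : Fin k → A → A) (E : Set A) : Ideal A :=
  sInf {I : Ideal A | E ⊆ I ∧ I.IsRadical ∧ IsDiffIdeal d I}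

/-- The canonical map from `A` to the residue field `K(p) = Frac(A/p)`. -/
noncomputable def resMap {A : Type*} [CommRing A] {k : ℕ} {d : Fin k → A → A}
    (p : DiffSpec d) : A →+* FractionRing (A ⧸ p.1.asIdeal) :=
  (algebraMap (A ⧸ p.1.asIdeal) (FractionRing (A ⧸ p.1.asIdeal))).comp
    (Ideal.Quotient.mk p.1.asIdeal)

/-- A function `X → ⊔_p K(p)` is regular if it is locally a quotient `a/b` with `b`
outside every prime differential ideal of the neighborhood. -/
def RegularRes {A : Type*} [CommRing A] {k : ℕ} {d : Fin k → A → A}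
    (f : ∀ p : DiffSpec d, FractionRing (A ⧸ p.1.asIdeal)) : Prop :=
  ∀ p : DiffSpec d, ∃ U : Set (DiffSpec d), IsOpen U ∧ p ∈ U ∧ ∃ a b : A,
    (∀ q ∈ U, b ∉ q.1.asIdeal) ∧ ∀ q ∈ U, f q * resMap q b = resMap q a

section Aux

variable {A : Type*} [CommRing A] {k : ℕ} {d : Fin k → A → A}

lemma resMap_eq_zero_iff (p : DiffSpec d) (a : A) :
    resMap p a = 0 ↔ a ∈ p.1.asIdeal := by
  haveI := p.1.isPrime
  constructor
  · intro h
    have hinj := IsFractionRing.injective (A ⧸ p.1.asIdeal) (FractionRing (A ⧸ p.1.asIdeal))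
    have h2 : Ideal.Quotient.mk p.1.asIdeal a = 0 := by
      apply hinj
      simpa [resMap] using h
    exact Ideal.Quotient.eq_zero_iff_mem.mp h2
  · intro h
    simp [resMap, Ideal.Quotient.eq_zero_iff_mem.mpr h]

end Aux

set_option maxHeartbeats 1000000 in
/-- For any differential subring `D` of `O'(X)` containing the image of `ι' : A → O'(X)`,
the contraction map `Spec^Δ D → Spec^Δ A` is a homeomorphism. -/
theorem stmt12 {A : Type*} [CommRing A] {k : ℕ} (δ : Fin k → Derivation ℤ A A)
    (hcomm : ∀ i j a, δ i (δ j a) = δ j (δ i a))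
    (δK : ∀ p : DiffSpec (fun i => ⇑(δ i)),
      Fin k → Derivation ℤ (FractionRing (A ⧸ p.1.asIdeal)) (FractionRing (A ⧸ p.1.asIdeal)))
    (hδK : ∀ (p : DiffSpec (fun i => ⇑(δ i))) (i : Fin k) (a : A), δK p i (resMap p a) = resMap p (δ i a))
    (D : Subring (∀ p : DiffSpec (fun i => ⇑(δ i)), FractionRing (A ⧸ p.1.asIdeal)))
    (hreg : ∀ f ∈ D, RegularRes f)
    (himg : ∀ a : A, (fun p : DiffSpec (fun i => ⇑(δ i)) => resMap p a) ∈ D)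
    (hclosed : ∀ f ∈ D, ∀ i, (fun p => δK p i (f p)) ∈ D)
    (dD : Fin k → D → D)
    (hdD : ∀ i (x : D) (p : DiffSpec (fun i => ⇑(δ i))), ((dD i x : D) : ∀ p, FractionRing (A ⧸ p.1.asIdeal)) p
      = δK p i (((x : D) : ∀ p, FractionRing (A ⧸ p.1.asIdeal)) p)) :
    ∃ h : DiffSpec dD ≃ₜ DiffSpec (fun i => ⇑(δ i)),
      ∀ q, (h q).1.asIdeal
        = Ideal.comap (RingHom.codRestrict (Pi.ringHom fun p : DiffSpec (fun i => ⇑(δ i)) => resMap p) D himg) q.1.asIdeal := by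
  set ιD : A →+* D := RingHom.codRestrict (Pi.ringHom fun p : DiffSpec (fun i => ⇑(δ i)) => resMap p) D himg with hιDdef
  have hιapp : ∀ (x : A) (q' : DiffSpec (fun i => ⇑(δ i))),
      ((ιD x : D) : ∀ p, FractionRing (A ⧸ p.1.asIdeal)) q' = resMap q' x := fun _ _ => rfl
  -- key derivation compatibility
  have hkey : ∀ (i : Fin k) (a : A), ιD (δ i a) = dD i (ιD a) := by
    intro i a
    apply Subtype.ext
    funext p
    rw [hdD i (ιD a) p, hιapp, hιapp, hδK]
  -- forward map
  let fwd : DiffSpec dD → DiffSpec (fun i => ⇑(δ i)) := fun q =>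
    ⟨PrimeSpectrum.comap ιD q.1, by
      intro i a ha
      show ιD (δ i a) ∈ q.1.asIdeal
      rw [hkey i a]
      exact q.2 i _ ha⟩
  have hmemfwd : ∀ (q : DiffSpec dD) (x : A), x ∈ (fwd q).1.asIdeal ↔ ιD x ∈ q.1.asIdeal :=
    fun q x => Iff.rfl
  -- evaluation maps
  let evp : ∀ p : DiffSpec (fun i => ⇑(δ i)), D →+* FractionRing (A ⧸ p.1.asIdeal) :=
    fun p => (Pi.evalRingHom _ p).comp D.subtype
  have hevp : ∀ (p : DiffSpec (fun i => ⇑(δ i))) (f : D),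
      evp p f = (f : ∀ p, FractionRing (A ⧸ p.1.asIdeal)) p := fun _ _ => rfl
  -- main lemma: q = {f | f (fwd q) = 0}
  have hmain : ∀ (q : DiffSpec dD) (f : D),
      f ∈ q.1.asIdeal ↔ (f : ∀ p, FractionRing (A ⧸ p.1.asIdeal)) (fwd q) = 0 := by
    intro q f
    set p := fwd q with hp
    haveI := p.1.isPrime
    obtain ⟨U, hUopen, hpU, a, b, hb, heq⟩ := hreg f.1 f.2 p
    obtain ⟨s, hsopen, hsU⟩ := isOpen_induced_iff.mp hUopen
    have hps : p.1 ∈ s := by rw [← hsU] at hpU; exact hpU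
    obtain ⟨v, ⟨c, rfl⟩, hpc, hcs⟩ :=
      PrimeSpectrum.isTopologicalBasis_basic_opens.exists_subset_of_mem_open hps hsopen
    have hcp : c ∉ p.1.asIdeal := hpc
    have hcmem : ∀ q' : DiffSpec (fun i => ⇑(δ i)), c ∉ q'.1.asIdeal → q' ∈ U := by
      intro q' h
      rw [← hsU]
      exact hcs h
    have hbp : resMap p b ≠ 0 := fun h0 => hb p hpU ((resMap_eq_zero_iff p b).mp h0)
    have hzero : ιD c * (f * ιD b - ιD a) = 0 := by
      apply Subtype.ext
      funext q'
      simp only [MulMemClass.coe_mul, AddSubgroupClass.coe_sub, ZeroMemClass.coe_zero,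
        Pi.mul_apply, Pi.sub_apply, Pi.zero_apply, hιapp]
      by_cases hcq : c ∈ q'.1.asIdeal
      · rw [(resMap_eq_zero_iff q' c).mpr hcq, zero_mul]
      · rw [heq q' (hcmem q' hcq), sub_self, mul_zero]
    have hcq : ιD c ∉ q.1.asIdeal := fun h => hcp ((hmemfwd q c).mpr h)
    have hsub : f * ιD b - ιD a ∈ q.1.asIdeal := by
      have h0 : ιD c * (f * ιD b - ιD a) ∈ q.1.asIdeal := by
        rw [hzero]; exact q.1.asIdeal.zero_mem
      rcases q.1.isPrime.mem_or_mem h0 with h | h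
      · exact absurd h hcq
      · exact h
    have hbq : ιD b ∉ q.1.asIdeal := fun hm => hb p hpU ((hmemfwd q b).mpr hm)
    constructor
    · intro hf
      have haq : ιD a ∈ q.1.asIdeal := by
        have h1 := q.1.asIdeal.sub_mem (Ideal.mul_mem_right (ιD b) _ hf) hsub
        simpa using h1
      have hap : a ∈ p.1.asIdeal := (hmemfwd q a).mpr haq
      have h1 := heq p hpU
      rw [(resMap_eq_zero_iff p a).mpr hap] at h1
      rcases mul_eq_zero.mp h1 with h | h
      · exact h
      · exact absurd h hbp
    · intro hf
      have h1 := heq p hpU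
      rw [hf, zero_mul] at h1
      have hap : a ∈ p.1.asIdeal := (resMap_eq_zero_iff p a).mp h1.symm
      have hfb : f * ιD b ∈ q.1.asIdeal := by
        have h2 := q.1.asIdeal.add_mem hsub ((hmemfwd q a).mp hap)
        simpa using h2
      rcases q.1.isPrime.mem_or_mem hfb with h | h
      · exact h
      · exact absurd h hbq
  -- backward map
  let bwd : DiffSpec (fun i => ⇑(δ i)) → DiffSpec dD := fun p =>
    ⟨⟨RingHom.ker (evp p), by
        haveI := p.1.isPrime
        exact RingHom.ker_isPrime (evp p)⟩, by
      intro i x hx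
      have hx0 : evp p x = 0 := hx
      show dD i x ∈ RingHom.ker (evp p)
      rw [RingHom.mem_ker, hevp, hdD i x p, ← hevp, hx0]
      exact (δK p i).map_zero⟩
  have hmembwd : ∀ (p : DiffSpec (fun i => ⇑(δ i))) (f : D),
      f ∈ (bwd p).1.asIdeal ↔ evp p f = 0 := fun p f => RingHom.mem_ker
  -- openness of nonvanishing sets
  have hopen : ∀ f : D, IsOpen {p : DiffSpec (fun i => ⇑(δ i)) |
      (f : ∀ p, FractionRing (A ⧸ p.1.asIdeal)) p ≠ 0} := by
    intro f
    rw [isOpen_iff_forall_mem_open]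
    intro p hp
    haveI := p.1.isPrime
    obtain ⟨U, hUopen, hpU, a, b, hb, heq⟩ := hreg f.1 f.2 p
    have hbp : resMap p b ≠ 0 := fun h0 => hb p hpU ((resMap_eq_zero_iff p b).mp h0)
    refine ⟨U ∩ (Subtype.val ⁻¹' (PrimeSpectrum.basicOpen a : Set (PrimeSpectrum A))), ?_, ?_, ?_, ?_⟩
    · rintro q ⟨hqU, hqa⟩
      haveI := q.1.isPrime
      have ha : resMap q a ≠ 0 := fun h0 =>
        (PrimeSpectrum.mem_basicOpen a q.1).mp hqa ((resMap_eq_zero_iff q a).mp h0)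
      intro h0
      apply ha
      rw [← heq q hqU, h0, zero_mul]
    · exact hUopen.inter ((PrimeSpectrum.isOpen_basicOpen).preimage continuous_subtype_val)
    · exact hpU
    · show a ∉ p.1.asIdeal
      intro hap
      have h1 := heq p hpU
      rw [(resMap_eq_zero_iff p a).mpr hap] at h1
      rcases mul_eq_zero.mp h1 with h | h
      · exact hp h
      · exact hbp h
  -- continuity
  have hcontF : Continuous fwd :=
    Continuous.subtype_mk ((PrimeSpectrum.continuous_comap ιD).comp continuous_subtype_val) _
  have hcontB : Continuous bwd := by
    apply Continuous.subtype_mk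
    rw [PrimeSpectrum.isTopologicalBasis_basic_opens.continuous_iff]
    rintro s ⟨f, rfl⟩
    convert hopen f using 1
    rfl
  refine ⟨Homeomorph.mk ⟨fwd, bwd, ?_, ?_⟩ hcontF hcontB, fun q => rfl⟩
  · intro q
    apply Subtype.ext
    apply PrimeSpectrum.ext
    ext f
    rw [hmembwd (fwd q) f, hevp]
    exact (hmain q f).symm
  · intro p
    apply Subtype.ext
    apply PrimeSpectrum.ext
    ext a
    rw [hmemfwd (bwd p) a, hmembwd p (ιD a), hevp, hιapp]
    exact resMap_eq_zero_iff p a
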